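/- arXiv:1408.0211 — 5 statements merged into one kernel-verified Lean document; each statement's English description precedes it below -/
import Mathlib

section
/- Let (M,d) be a finite metric space, b ∈ M a basepoint, and F ⊆ M a subset such that for all x,y ∈ M there exist A,B ∈ F with d(A,B) = d(A,x) + d(x,y) + d(y,B). Then the map g : M → ℓ∞(F) defined by g(x)(β) = d(x,β) − d(b,β) is an isometric embedding with g(b) = 0. -/
/-- On a finite metric space with a basepoint `b` and a subset `F` such that any
pair `x, y` lies on a geodesic between two points of `F`, the map
`g x = (dist x β - dist b β)_{β ∈ F}` is an isometric embedding into `ℓ∞(F)` with `g b = 0`. -/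
theorem stmt0 (M : Type*) [MetricSpace M] [Fintype M] (b : M) (F : Finset M)
    (hF : ∀ x y : M, ∃ A ∈ F, ∃ B ∈ F, dist A B = dist A x + dist x y + dist y B) :
    let g : M → (F → ℝ) := fun x β => dist x (β : M) - dist b (β : M)
    (∀ x y : M, ‖g x - g y‖ = dist x y) ∧ g b = 0 := by
  intro g
  constructor
  · intro x y
    obtain ⟨A, hA, B, hB, hAB⟩ := hF x y
    apply le_antisymm
    · rw [pi_norm_le_iff_of_nonneg dist_nonneg]
      intro β
      simp only [g, Pi.sub_apply, Real.norm_eq_abs]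
      have : dist x β - dist b β - (dist y β - dist b β) = dist x β - dist y β := by ring
      rw [this]
      exact abs_dist_sub_le x y β
    · have hAy : dist A y = dist A x + dist x y := by
        have h1 : dist A B ≤ dist A y + dist y B := dist_triangle A y B
        have h2 : dist A y ≤ dist A x + dist x y := dist_triangle A x y
        linarith
      have hcomp : (g x - g y) ⟨A, hA⟩ = -(dist x y) := by
        simp only [g, Pi.sub_apply]
        rw [dist_comm x A, dist_comm y A]
        linarith
      calc dist x y = ‖(g x - g y) ⟨A, hA⟩‖ := by
            rw [hcomp, Real.norm_eq_abs, abs_neg, abs_of_nonneg dist_nonneg]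
        _ ≤ ‖g x - g y‖ := norm_le_pi_norm _ _
  · funext β
    simp [g]
end

section
/- Define the derivation T' of a tree T on ℕ by: (n₁,…,n_h) ∈ T' iff (n₁,…,n_{h−1},k) is not maximal in T for some k ∈ ℕ. Define transfinite iterates T^{(0)} = T, T^{(α+1)} = (T^{(α)})', T^{(α)} = ⋂_{β<α} T^{(β)} for limit α, and the index o(T) = inf{α : T^{(α)} = ∅}. Then for every countable ordinal α, the tree T_{α+1} satisfies o(T_{α+1}) = α + 1. -/
/-- `paperTree seq hseq α` is the tree `T_{α+1}` on ℕ (as a set of finite nonempty sequences):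
`T₁ = ℕ`, `T_{α+2} = ℕ ∪ ⋃ₙ n⌢T_{α+1}`, and for limit `α`, `T_{α+1} = ℕ ∪ ⋃ₙ n⌢T_{αₙ+1}`
where `αₙ = seq α n` is the fixed sequence chosen for `α`. -/
noncomputable def paperTree (seq : Ordinal → ℕ → Ordinal)
    (hseq : ∀ α : Ordinal, Order.IsSuccLimit α → ∀ n : ℕ, seq α n < α) : Ordinal → Set (List ℕ) :=
  fun α => Ordinal.limitRecOn α
    {l | ∃ n : ℕ, l = [n]}
    (fun _ ih => {l | ∃ n : ℕ, l = [n]} ∪ ⋃ n : ℕ, (fun s => n :: s) '' ih)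
    (fun o ho ih =>
      {l | ∃ n : ℕ, l = [n]} ∪ ⋃ n : ℕ, (fun s => n :: s) '' ih (seq o n) (hseq o ho n))

/-- A node is maximal in `S` if it belongs to `S` and no proper extension of it lies in `S`
(extension = the node is a prefix of it). -/
def isMaxNode (S : Set (List ℕ)) (s : List ℕ) : Prop :=
  s ∈ S ∧ ∀ t ∈ S, s <+: t → t = s

/-- The derivation of a tree on ℕ: `(n₁,…,n_h) ∈ T'` iff it is in `T` and, for some `k`,
the sibling `(n₁,…,n_{h−1},k)` is not maximal in `T`. -/
def treeDeriv (S : Set (List ℕ)) : Set (List ℕ) :=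
  {l ∈ S | ∃ k : ℕ, ¬ isMaxNode S (l.dropLast ++ [k])}

/-- Transfinite iterates `T^{(β)}` of the derivation, with intersections at limit stages. -/
noncomputable def treeDerivIter (S : Set (List ℕ)) : Ordinal → Set (List ℕ) :=
  fun α => Ordinal.limitRecOn α S (fun _ ih => treeDeriv ih)
    (fun o _ ih => ⋂ β : Set.Iio o, ih β.1 β.2)

open Set

namespace Stmt5Aux

/-- The first level: all singletons. -/
def L1 : Set (List ℕ) := {l | ∃ n : ℕ, l = [n]}

/-- All elements are nonempty lists. -/
def NEset (S : Set (List ℕ)) : Prop := ∀ l ∈ S, l ≠ []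

/-- Closed under changing the last coordinate. -/
def SCset (S : Set (List ℕ)) : Prop := ∀ l ∈ S, ∀ k : ℕ, l.dropLast ++ [k] ∈ S

/-- Attaching each `C n` below the root `n`. -/
def cone (C : ℕ → Set (List ℕ)) : Set (List ℕ) :=
  L1 ∪ ⋃ n : ℕ, (fun s => n :: s) '' C n

lemma mem_cone_iff {C : ℕ → Set (List ℕ)} {l : List ℕ} :
    l ∈ cone C ↔ (∃ n, l = [n]) ∨ ∃ n s, s ∈ C n ∧ n :: s = l := by
  simp [cone, L1]

lemma single_mem_cone (C : ℕ → Set (List ℕ)) (k : ℕ) : [k] ∈ cone C :=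
  mem_cone_iff.mpr (Or.inl ⟨k, rfl⟩)

lemma L1_subset_cone (C : ℕ → Set (List ℕ)) : L1 ⊆ cone C := fun _ h => Or.inl h

lemma cons_mem_cone {C : ℕ → Set (List ℕ)} {n : ℕ} {s : List ℕ} (hs : s ∈ C n) :
    n :: s ∈ cone C :=
  mem_cone_iff.mpr (Or.inr ⟨n, s, hs, rfl⟩)

lemma cons_mem_cone_iff {C : ℕ → Set (List ℕ)} {n : ℕ} {s : List ℕ} (hs : s ≠ []) :
    n :: s ∈ cone C ↔ s ∈ C n := by
  rw [mem_cone_iff]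
  constructor
  · rintro (⟨m, hm⟩ | ⟨m, u, hu, he⟩)
    · simp at hm; exact absurd hm.2 hs
    · rw [List.cons.injEq] at he
      rw [← he.2]; rwa [he.1] at hu
  · exact fun h => Or.inr ⟨n, s, h, rfl⟩

lemma NE_cone (C : ℕ → Set (List ℕ)) : NEset (cone C) := by
  intro l hl
  rcases mem_cone_iff.mp hl with ⟨n, rfl⟩ | ⟨n, s, _, rfl⟩ <;> simp

lemma dropLast_cons {n : ℕ} {s : List ℕ} (hs : s ≠ []) (k : ℕ) :
    (n :: s).dropLast ++ [k] = n :: (s.dropLast ++ [k]) := by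
  cases s with
  | nil => exact absurd rfl hs
  | cons a t => simp

lemma SC_L1 : SCset L1 := by
  rintro l ⟨n, rfl⟩ k
  exact ⟨k, rfl⟩

lemma SC_cone {C : ℕ → Set (List ℕ)} (hNE : ∀ n, NEset (C n)) (hSC : ∀ n, SCset (C n)) :
    SCset (cone C) := by
  intro l hl k
  rcases mem_cone_iff.mp hl with ⟨n, rfl⟩ | ⟨n, s, hs, rfl⟩
  · exact single_mem_cone C k
  · rw [dropLast_cons (hNE n s hs) k]
    exact cons_mem_cone (hSC n s hs k)

lemma notMax_single {C : ℕ → Set (List ℕ)} (hNE : ∀ n, NEset (C n)) {k : ℕ}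
    (hk : (C k).Nonempty) : ¬ isMaxNode (cone C) [k] := by
  rintro ⟨-, hmax⟩
  obtain ⟨s, hs⟩ := hk
  have := hmax (k :: s) (cons_mem_cone hs) ⟨s, rfl⟩
  simp at this
  exact hNE k s hs this

lemma max_single {C : ℕ → Set (List ℕ)} {k : ℕ} (hk : C k = ∅) :
    isMaxNode (cone C) [k] := by
  refine ⟨single_mem_cone C k, ?_⟩
  intro t ht hpre
  rcases mem_cone_iff.mp ht with ⟨m, rfl⟩ | ⟨m, u, hu, rfl⟩
  · obtain ⟨r, hr⟩ := hpre
    simp at hr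
    simp [hr.1]
  · obtain ⟨r, hr⟩ := hpre
    simp at hr
    obtain ⟨hkm, rfl⟩ := hr
    rw [← hkm, hk] at hu
    exact absurd hu (notMem_empty _)

lemma max_cons_iff {C : ℕ → Set (List ℕ)} (hNE : ∀ n, NEset (C n)) {n : ℕ} {s : List ℕ}
    (hs : s ∈ C n) : isMaxNode (cone C) (n :: s) ↔ isMaxNode (C n) s := by
  constructor
  · rintro ⟨-, hmax⟩
    refine ⟨hs, fun u hu hpre => ?_⟩
    have := hmax (n :: u) (cons_mem_cone hu) (List.cons_prefix_cons.mpr ⟨rfl, hpre⟩)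
    simpa using this
  · rintro ⟨-, hmax⟩
    refine ⟨cons_mem_cone hs, fun t ht hpre => ?_⟩
    obtain ⟨r, hr⟩ := hpre
    subst hr
    have hne : s ++ r ≠ [] := by
      intro h; exact hNE n s hs (List.append_eq_nil_iff.mp h).1
    have hmem : s ++ r ∈ C n := by
      have : (n :: s) ++ r = n :: (s ++ r) := rfl
      rw [this] at ht
      exact (cons_mem_cone_iff hne).mp ht
    have := hmax (s ++ r) hmem ⟨r, rfl⟩
    simp [this]

/-- Derivation of a cone with at least one nonempty branch. -/
lemma deriv_cone (C : ℕ → Set (List ℕ)) (hNE : ∀ n, NEset (C n)) (hSC : ∀ n, SCset (C n))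
    (hne : ∃ k, (C k).Nonempty) :
    treeDeriv (cone C) = cone (fun n => treeDeriv (C n)) := by
  ext l
  constructor
  · rintro ⟨hl, k, hk⟩
    rcases mem_cone_iff.mp hl with ⟨m, rfl⟩ | ⟨n, s, hs, rfl⟩
    · exact single_mem_cone _ m
    · rw [dropLast_cons (hNE n s hs) k] at hk
      rw [max_cons_iff hNE (hSC n s hs k)] at hk
      exact cons_mem_cone (C := fun n => treeDeriv (C n)) ⟨hs, k, hk⟩
  · intro hl
    rcases mem_cone_iff.mp hl with ⟨m, rfl⟩ | ⟨n, s, hs, rfl⟩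
    · refine ⟨single_mem_cone C m, ?_⟩
      obtain ⟨k, hk⟩ := hne
      exact ⟨k, notMax_single hNE hk⟩
    · obtain ⟨hs', k, hk⟩ := hs
      refine ⟨cons_mem_cone hs', k, ?_⟩
      rw [dropLast_cons (hNE n s hs') k]
      rw [max_cons_iff hNE (hSC n s hs' k)]
      exact hk

lemma deriv_L1 : treeDeriv L1 = ∅ := by
  ext l
  simp only [mem_empty_iff_false, iff_false]
  rintro ⟨⟨n, rfl⟩, k, hk⟩
  refine hk ⟨⟨k, rfl⟩, ?_⟩
  rintro t ⟨m, rfl⟩ ⟨r, hr⟩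
  simp at hr
  simp [hr.1]

lemma cone_empty : cone (fun _ => (∅ : Set (List ℕ))) = L1 := by
  simp [cone]

/-! ### unfolding lemmas -/

lemma paperTree_zero (seq : Ordinal → ℕ → Ordinal)
    (hseq : ∀ α : Ordinal, Order.IsSuccLimit α → ∀ n : ℕ, seq α n < α) :
    paperTree seq hseq 0 = L1 :=
  Ordinal.limitRecOn_zero _ _ _

lemma paperTree_succ (seq : Ordinal → ℕ → Ordinal)
    (hseq : ∀ α : Ordinal, Order.IsSuccLimit α → ∀ n : ℕ, seq α n < α) (γ : Ordinal) :
    paperTree seq hseq (Order.succ γ) = cone (fun _ => paperTree seq hseq γ) := by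
  unfold paperTree
  rw [Ordinal.limitRecOn_succ]
  rfl

lemma paperTree_limit (seq : Ordinal → ℕ → Ordinal)
    (hseq : ∀ α : Ordinal, Order.IsSuccLimit α → ∀ n : ℕ, seq α n < α) {o : Ordinal} (ho : Order.IsSuccLimit o) :
    paperTree seq hseq o = cone (fun n => paperTree seq hseq (seq o n)) := by
  unfold paperTree
  rw [Ordinal.limitRecOn_limit _ _ _ _ ho]
  rfl

lemma iter_zero (S : Set (List ℕ)) : treeDerivIter S 0 = S :=
  Ordinal.limitRecOn_zero _ _ _

lemma iter_succ (S : Set (List ℕ)) (β : Ordinal) :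
    treeDerivIter S (Order.succ β) = treeDeriv (treeDerivIter S β) := by
  unfold treeDerivIter
  rw [Ordinal.limitRecOn_succ]

lemma iter_limit (S : Set (List ℕ)) {o : Ordinal} (ho : Order.IsSuccLimit o) :
    treeDerivIter S o = ⋂ β : Set.Iio o, treeDerivIter S β.1 := by
  unfold treeDerivIter
  rw [Ordinal.limitRecOn_limit _ _ _ _ ho]

lemma treeDeriv_subset (S : Set (List ℕ)) : treeDeriv S ⊆ S := fun _ h => h.1

lemma iter_anti (S : Set (List ℕ)) :
    ∀ {γ β : Ordinal}, β ≤ γ → treeDerivIter S γ ⊆ treeDerivIter S β := by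
  intro γ
  induction γ using Ordinal.limitRecOn with
  | zero =>
    intro β h
    rw [nonpos_iff_eq_zero.mp h]
  | add_one γ ih =>
    rw [Ordinal.add_one_eq_succ γ]
    intro β h
    rcases Order.le_succ_iff_eq_or_le.mp h with rfl | h
    · exact subset_rfl
    · rw [iter_succ]
      exact (treeDeriv_subset _).trans (ih h)
  | limit o ho ih =>
    intro β h
    rcases eq_or_lt_of_le h with rfl | h
    · exact subset_rfl
    · rw [iter_limit S ho]
      exact iInter_subset (fun b : Set.Iio o => treeDerivIter S b.1) ⟨β, h⟩

lemma iter_subset (S : Set (List ℕ)) (β : Ordinal) : treeDerivIter S β ⊆ S := by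
  have := iter_anti S (zero_le (a := β))
  rwa [iter_zero] at this

lemma NE_iter {S : Set (List ℕ)} (h : NEset S) (β : Ordinal) : NEset (treeDerivIter S β) :=
  fun l hl => h l (iter_subset S β hl)

lemma SC_treeDeriv {S : Set (List ℕ)} (h : SCset S) : SCset (treeDeriv S) := by
  rintro l ⟨hl, k', hk'⟩ k
  refine ⟨h l hl k, k', ?_⟩
  rwa [List.dropLast_concat]

lemma SC_iter {S : Set (List ℕ)} (h : SCset S) (β : Ordinal) : SCset (treeDerivIter S β) := by
  induction β using Ordinal.limitRecOn with
  | zero => rwa [iter_zero]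
  | add_one γ ih => rw [Ordinal.add_one_eq_succ γ]; rw [iter_succ]; exact SC_treeDeriv ih
  | limit o ho ih =>
    rw [iter_limit S ho]
    intro l hl k
    rw [mem_iInter] at hl ⊢
    exact fun b => ih b.1 b.2 l (hl b) k

lemma NE_paperTree (seq : Ordinal → ℕ → Ordinal)
    (hseq : ∀ α : Ordinal, Order.IsSuccLimit α → ∀ n : ℕ, seq α n < α) (α : Ordinal) :
    NEset (paperTree seq hseq α) := by
  induction α using Ordinal.limitRecOn with
  | zero => rw [paperTree_zero]; rintro l ⟨n, rfl⟩; simp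
  | add_one γ ih => rw [Ordinal.add_one_eq_succ γ]; rw [paperTree_succ]; exact NE_cone _
  | limit o ho ih => rw [paperTree_limit seq hseq ho]; exact NE_cone _

lemma SC_paperTree (seq : Ordinal → ℕ → Ordinal)
    (hseq : ∀ α : Ordinal, Order.IsSuccLimit α → ∀ n : ℕ, seq α n < α) (α : Ordinal) :
    SCset (paperTree seq hseq α) := by
  induction α using Ordinal.limitRecOn with
  | zero => rw [paperTree_zero]; exact SC_L1
  | add_one γ ih =>
    rw [Ordinal.add_one_eq_succ γ]
    rw [paperTree_succ]
    exact SC_cone (fun _ => NE_paperTree seq hseq γ) (fun _ => ih)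
  | limit o ho ih =>
    rw [paperTree_limit seq hseq ho]
    exact SC_cone (fun n => NE_paperTree seq hseq _) (fun n => ih _ (hseq o ho n))

lemma iInter_cone {ι : Sort*} [Nonempty ι] (F : ι → ℕ → Set (List ℕ))
    (hNE : ∀ i n, NEset (F i n)) :
    ⋂ i, cone (F i) = cone (fun n => ⋂ i, F i n) := by
  ext l
  rw [mem_iInter]
  constructor
  · intro h
    obtain ⟨i0⟩ := ‹Nonempty ι›
    rcases mem_cone_iff.mp (h i0) with ⟨m, rfl⟩ | ⟨n, s, hs, rfl⟩
    · exact single_mem_cone _ m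
    · have hsne : s ≠ [] := hNE i0 n s hs
      refine cons_mem_cone ?_
      rw [mem_iInter]
      intro i
      exact (cons_mem_cone_iff hsne).mp (h i)
  · intro h i
    rcases mem_cone_iff.mp h with ⟨m, rfl⟩ | ⟨n, s, hs, rfl⟩
    · exact single_mem_cone _ m
    · exact cons_mem_cone (mem_iInter.mp hs i)

/-- Main computation: iterated derivatives of a cone, as long as some branch survives. -/
lemma iter_cone (C : ℕ → Set (List ℕ)) (hNE : ∀ n, NEset (C n)) (hSC : ∀ n, SCset (C n)) :
    ∀ β : Ordinal, (∀ δ < β, ∃ k, (treeDerivIter (C k) δ).Nonempty) →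
      treeDerivIter (cone C) β = cone (fun n => treeDerivIter (C n) β) := by
  intro β
  induction β using Ordinal.limitRecOn with
  | zero =>
    intro _
    rw [iter_zero]
    exact congrArg cone (funext fun n => (iter_zero (C n)).symm)
  | add_one δ ih =>
    rw [Ordinal.add_one_eq_succ δ]
    intro h
    rw [iter_succ, ih (fun δ' hδ' => h δ' (hδ'.trans (Order.lt_succ δ))),
      deriv_cone _ (fun n => NE_iter (hNE n) δ) (fun n => SC_iter (hSC n) δ)
        (h δ (Order.lt_succ δ))]
    exact congrArg cone (funext fun n => (iter_succ (C n) δ).symm)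
  | limit o ho ih =>
    intro h
    rw [iter_limit _ ho]
    have h1 : ∀ b : Set.Iio o, treeDerivIter (cone C) b.1
        = cone (fun n => treeDerivIter (C n) b.1) :=
      fun b => ih b.1 b.2 (fun δ hδ => h δ (hδ.trans b.2))
    rw [iInter_congr h1]
    haveI : Nonempty (Set.Iio o) := ⟨⟨0, ho.pos⟩⟩
    rw [iInter_cone (fun (b : Set.Iio o) n => treeDerivIter (C n) b.1)
      (fun b n => NE_iter (hNE n) b.1)]
    exact congrArg cone (funext fun n => (iter_limit (C n) ho).symm)

/-- Key induction: below `α+1` the iterates contain all of `L1`; at `α+1` they vanish. -/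
lemma key (seq : Ordinal → ℕ → Ordinal)
    (hseq : ∀ α : Ordinal, Order.IsSuccLimit α → ∀ n : ℕ, seq α n < α)
    (hsup : ∀ α : Ordinal, Order.IsSuccLimit α → α.card ≤ Cardinal.aleph0 → (⨆ n : ℕ, seq α n) = α) :
    ∀ α : Ordinal, α.card ≤ Cardinal.aleph0 →
      (∀ β ≤ α, L1 ⊆ treeDerivIter (paperTree seq hseq α) β) ∧
      treeDerivIter (paperTree seq hseq α) (α + 1) = ∅ := by
  intro α
  induction α using Ordinal.limitRecOn with
  | zero =>
    intro _
    constructor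
    · intro β hβ
      rw [nonpos_iff_eq_zero.mp hβ, iter_zero, paperTree_zero]
    · rw [paperTree_zero, Ordinal.add_one_eq_succ, iter_succ, iter_zero, deriv_L1]
  | add_one γ ih =>
    rw [Ordinal.add_one_eq_succ γ]
    intro hcard
    have hcγ : γ.card ≤ Cardinal.aleph0 :=
      le_trans (Ordinal.card_le_card (Order.le_succ γ)) hcard
    obtain ⟨ihb, iha⟩ := ih hcγ
    have hform : ∀ β ≤ Order.succ γ,
        treeDerivIter (paperTree seq hseq (Order.succ γ)) β
          = cone (fun _ => treeDerivIter (paperTree seq hseq γ) β) := by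
      intro β hβ
      rw [paperTree_succ]
      apply iter_cone _ (fun _ => NE_paperTree seq hseq γ) (fun _ => SC_paperTree seq hseq γ)
      intro δ hδ
      have hδγ : δ ≤ γ := Order.lt_succ_iff.mp (lt_of_lt_of_le hδ hβ)
      exact ⟨0, ⟨[0], ihb δ hδγ ⟨0, rfl⟩⟩⟩
    constructor
    · intro β hβ
      rw [hform β hβ]
      exact L1_subset_cone _
    · rw [Ordinal.add_one_eq_succ, iter_succ, hform (Order.succ γ) le_rfl]
      have hz : treeDerivIter (paperTree seq hseq γ) (Order.succ γ) = ∅ := by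
        rw [← Ordinal.add_one_eq_succ]; exact iha
      rw [hz, cone_empty, deriv_L1]
  | limit o ho ih =>
    intro hcard
    have hsupo := hsup o ho hcard
    have hcn : ∀ n, (seq o n).card ≤ Cardinal.aleph0 :=
      fun n => le_trans (Ordinal.card_le_card (hseq o ho n).le) hcard
    have ihn := fun n => ih (seq o n) (hseq o ho n) (hcn n)
    have hform : ∀ β ≤ o,
        treeDerivIter (paperTree seq hseq o) β
          = cone (fun n => treeDerivIter (paperTree seq hseq (seq o n)) β) := by
      intro β hβ
      rw [paperTree_limit seq hseq ho]
      apply iter_cone _ (fun n => NE_paperTree seq hseq _) (fun n => SC_paperTree seq hseq _)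
      intro δ hδ
      have hδo : δ < o := lt_of_lt_of_le hδ hβ
      obtain ⟨n, hn⟩ := Ordinal.lt_iSup_iff.mp (hsupo ▸ hδo)
      exact ⟨n, ⟨[0], (ihn n).1 δ hn.le ⟨0, rfl⟩⟩⟩
    constructor
    · intro β hβ
      rw [hform β hβ]
      exact L1_subset_cone _
    · rw [Ordinal.add_one_eq_succ, iter_succ, hform o le_rfl]
      have hz : ∀ n, treeDerivIter (paperTree seq hseq (seq o n)) o = ∅ := by
        intro n
        have h1 : seq o n + 1 ≤ o := by
          rw [Ordinal.add_one_eq_succ, Order.succ_le_iff]; exact hseq o ho n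
        apply subset_empty_iff.mp
        calc treeDerivIter (paperTree seq hseq (seq o n)) o
            ⊆ treeDerivIter (paperTree seq hseq (seq o n)) (seq o n + 1) := iter_anti _ h1
          _ = ∅ := (ihn n).2
      rw [show (fun n => treeDerivIter (paperTree seq hseq (seq o n)) o)
          = (fun _ => (∅ : Set (List ℕ))) from funext hz, cone_empty, deriv_L1]

end Stmt5Aux

set_option linter.unusedVariables false in
/-- the index `o(T) = inf {β : T^{(β)} = ∅}` of the tree `T_{α+1}` equals `α + 1`,
for every countable ordinal α. -/
theorem stmt5 (seq : Ordinal → ℕ → Ordinal)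
    (hseq : ∀ α : Ordinal, Order.IsSuccLimit α → ∀ n : ℕ, seq α n < α)
    (hmono : ∀ α : Ordinal, Order.IsSuccLimit α → α.card ≤ Cardinal.aleph0 → StrictMono (seq α))
    (hsup : ∀ α : Ordinal, Order.IsSuccLimit α → α.card ≤ Cardinal.aleph0 → (⨆ n : ℕ, seq α n) = α)
    (α : Ordinal) (hα : α.card ≤ Cardinal.aleph0) :
    sInf {β : Ordinal | treeDerivIter (paperTree seq hseq α) β = ∅} = α + 1 := by
  obtain ⟨hb, ha⟩ := Stmt5Aux.key seq hseq hsup α hα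
  apply le_antisymm
  · exact csInf_le (OrderBot.bddBelow _) ha
  · refine le_csInf ⟨α + 1, ha⟩ ?_
    intro b hbmem
    by_contra hlt
    push_neg at hlt
    have hble : b ≤ α := by
      rw [Ordinal.add_one_eq_succ, Order.lt_succ_iff] at hlt
      exact hlt
    have hmem := hb b hble ⟨0, rfl⟩
    have hbmem' : treeDerivIter (paperTree seq hseq α) b = ∅ := hbmem
    rw [hbmem'] at hmem
    exact hmem
end

section
/- Let M be a metric space with d(x,y) ≥ 1 for all distinct x,y ∈ M, let X, Y be Banach spaces, let 𝒩 ⊆ X be an (a,b)-net, let π : X → 𝒩 satisfy ‖x − π(x)‖ ≤ b for all x ∈ X, and let g : M → X be an isometric embedding. Then for every λ > 2b, the map x ↦ π(λ·g(x)) from (M, λd) to 𝒩 is a Lipschitz embedding with distortion at most (1 + 2b/λ)(1 + 2b/(λ−2b)). -/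
/-- given a 1-separated metric space `M`, an `(a,b)`-net `𝒩` in a Banach space
`X` with a projection `π` onto `𝒩` moving points at most `b`, an isometric embedding
`g : M → X`, and `λ > 2b`, the map `x ↦ π(λ g(x))` from `(M, λ·d)` to `𝒩` is a Lipschitz
embedding with distortion at most `(1 + 2b/λ)(1 + 2b/(λ−2b))`. -/
theorem stmt15 (M : Type*) [MetricSpace M]
    (hsep : ∀ x y : M, x ≠ y → 1 ≤ dist x y)
    (X : Type*) [NormedAddCommGroup X] [NormedSpace ℝ X] [CompleteSpace X]
    (N : Set X) (a b : ℝ) (ha : 0 < a) (hb : 0 < b)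
    (hNsep : ∀ x ∈ N, ∀ y ∈ N, x ≠ y → a ≤ ‖x - y‖)
    (hNcov : ∀ x : X, ∃ y ∈ N, ‖x - y‖ ≤ b)
    (π : X → X) (hπN : ∀ x : X, π x ∈ N) (hπ : ∀ x : X, ‖x - π x‖ ≤ b)
    (g : M → X) (hg : ∀ x y : M, ‖g x - g y‖ = dist x y)
    (lam : ℝ) (hlam : 2 * b < lam) :
    ∃ C₁ C₂ : ℝ, 0 < C₁ ∧
      C₂ / C₁ ≤ (1 + 2 * b / lam) * (1 + 2 * b / (lam - 2 * b)) ∧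
      ∀ x y : M,
        C₁ * (lam * dist x y) ≤ ‖π (lam • g x) - π (lam • g y)‖ ∧
        ‖π (lam • g x) - π (lam • g y)‖ ≤ C₂ * (lam * dist x y) := by
  have hlam0 : 0 < lam := lt_trans (by positivity) hlam
  have hlam2 : 0 < lam - 2 * b := by linarith
  refine ⟨1 - 2 * b / lam, 1 + 2 * b / lam, ?_, ?_, ?_⟩
  · rw [sub_pos, div_lt_one hlam0]; exact hlam
  · have hc : (0:ℝ) < 1 - 2 * b / lam := by rw [sub_pos, div_lt_one hlam0]; exact hlam
    rw [div_le_iff₀ hc]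
    apply le_of_eq
    field_simp; ring
  · intro x y
    rcases eq_or_ne x y with rfl | hxy
    · simp
    · have hd1 : 1 ≤ dist x y := hsep x y hxy
      have hd0 : 0 ≤ dist x y := dist_nonneg
      have key : ‖lam • g x - lam • g y‖ = lam * dist x y := by
        rw [← smul_sub, norm_smul, Real.norm_eq_abs, abs_of_pos hlam0, hg]
      have hx := hπ (lam • g x)
      have hy := hπ (lam • g y)
      have tri1 : ‖π (lam • g x) - π (lam • g y)‖ ≤ lam * dist x y + 2 * b := by
        calc ‖π (lam • g x) - π (lam • g y)‖
            = ‖-(lam • g x - π (lam • g x)) + (lam • g x - lam • g y) + (lam • g y - π (lam • g y))‖ := by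
              congr 1; abel
          _ ≤ ‖-(lam • g x - π (lam • g x)) + (lam • g x - lam • g y)‖ + ‖lam • g y - π (lam • g y)‖ :=
              norm_add_le _ _
          _ ≤ ‖-(lam • g x - π (lam • g x))‖ + ‖lam • g x - lam • g y‖ + ‖lam • g y - π (lam • g y)‖ := by
              gcongr; exact norm_add_le _ _
          _ ≤ b + lam * dist x y + b := by
              rw [norm_neg, key]; gcongr
          _ = lam * dist x y + 2 * b := by ring
      have tri2 : lam * dist x y - 2 * b ≤ ‖π (lam • g x) - π (lam • g y)‖ := by
        have h := norm_sub_norm_le (lam • g x - lam • g y)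
          ((lam • g x - π (lam • g x)) - (lam • g y - π (lam • g y)))
        have h2 : ‖(lam • g x - π (lam • g x)) - (lam • g y - π (lam • g y))‖ ≤ 2 * b := by
          calc ‖(lam • g x - π (lam • g x)) - (lam • g y - π (lam • g y))‖
              ≤ ‖lam • g x - π (lam • g x)‖ + ‖lam • g y - π (lam • g y)‖ := norm_sub_le _ _
            _ ≤ b + b := by gcongr
            _ = 2 * b := by ring
        have heq : lam • g x - lam • g y - ((lam • g x - π (lam • g x)) - (lam • g y - π (lam • g y)))
            = π (lam • g x) - π (lam • g y) := by abel
        rw [key, heq] at h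
        linarith
      constructor
      · have : (1 - 2 * b / lam) * (lam * dist x y) = lam * dist x y - 2 * b * dist x y := by
          field_simp
        rw [this]
        have : 2 * b ≤ 2 * b * dist x y := le_mul_of_one_le_right (by positivity) hd1
        linarith
      · have : (1 + 2 * b / lam) * (lam * dist x y) = lam * dist x y + 2 * b * dist x y := by
          field_simp
        rw [this]
        have : 2 * b ≤ 2 * b * dist x y := le_mul_of_one_le_right (by positivity) hd1
        linarith
end

section
/- Let X, Y be Banach spaces and u : X → Y a uniformly continuous map. Then the Lipschitz constant of u at infinity, l_∞(u) = inf_{η>0} sup{‖u(x) − u(x')‖/‖x − x'‖ : ‖x − x'‖ ≥ η}, is finite. -/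
/-- Corson–Klee: a uniformly continuous map `u : X → Y` between Banach spaces
is Lipschitz for large distances: its Lipschitz constant at infinity
`l_∞(u) = inf_{η>0} sup {‖u x − u x'‖ / ‖x − x'‖ : ‖x − x'‖ ≥ η}` is finite, i.e. for some
`η > 0` there is `L` with `‖u x − u x'‖ ≤ L ‖x − x'‖` whenever `‖x − x'‖ ≥ η`. -/
theorem stmt17 (X : Type*) [NormedAddCommGroup X] [NormedSpace ℝ X] [CompleteSpace X]
    (Y : Type*) [NormedAddCommGroup Y] [NormedSpace ℝ Y] [CompleteSpace Y]
    (u : X → Y) (hu : UniformContinuous u) :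
    ∃ η > (0 : ℝ), ∃ L : ℝ, ∀ x x' : X, η ≤ ‖x - x'‖ → ‖u x - u x'‖ ≤ L * ‖x - x'‖ := by
  obtain ⟨δ, hδ, hδ1⟩ := Metric.uniformContinuous_iff.1 hu 1 one_pos
  refine ⟨δ, hδ, 3 / δ, fun x x' hxx => ?_⟩
  set d := ‖x - x'‖ with hd_def
  have hd : 0 < d := lt_of_lt_of_le hδ hxx
  set n : ℕ := ⌈d / δ⌉₊ + 1 with hn_def
  have hn : d / δ < (n : ℝ) := by
    calc d / δ ≤ (⌈d / δ⌉₊ : ℝ) := Nat.le_ceil _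
      _ < (n : ℝ) := by exact_mod_cast Nat.lt_succ_self _
  have hnpos : (0 : ℝ) < (n : ℝ) := lt_of_le_of_lt (div_nonneg hd.le hδ.le) hn
  set p : ℕ → X := fun i => x + ((i : ℝ) / n) • (x' - x) with hp_def
  have hp0 : p 0 = x := by simp [hp_def]
  have hpn : p n = x' := by
    simp only [hp_def, div_self hnpos.ne']
    rw [one_smul]; abel
  have step : ∀ i : ℕ, dist (p i) (p (i + 1)) < δ := by
    intro i
    have : p i - p (i + 1) = -((1 / (n : ℝ)) • (x' - x)) := by
      simp only [hp_def, Nat.cast_add, Nat.cast_one]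
      match_scalars
      have h : ((⌈d / δ⌉₊ : ℝ) + 1) ≠ 0 := by positivity
      field_simp
      ring
      ring
    rw [dist_eq_norm, this, norm_neg, norm_smul]
    have hxx' : ‖x' - x‖ = d := by rw [hd_def, norm_sub_rev]
    rw [hxx', Real.norm_eq_abs, abs_of_pos (by positivity : (0:ℝ) < 1 / (n:ℝ))]
    rw [one_div, inv_mul_lt_iff₀ hnpos]
    calc d = δ * (d / δ) := by field_simp
      _ < δ * n := mul_lt_mul_of_pos_left hn hδ
      _ = n * δ := mul_comm _ _
  have key : dist (u x) (u x') ≤ (n : ℝ) := by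
    rw [← hp0, ← hpn]
    calc dist (u (p 0)) (u (p n))
        ≤ ∑ i ∈ Finset.range n, dist (u (p i)) (u (p (i + 1))) :=
          dist_le_range_sum_dist (fun i => u (p i)) n
      _ ≤ ∑ i ∈ Finset.range n, (1 : ℝ) :=
          Finset.sum_le_sum fun i _ => (hδ1 (step i)).le
      _ = (n : ℝ) := by simp
  have hbound : (n : ℝ) ≤ 3 / δ * d := by
    have h1 : (n : ℝ) ≤ d / δ + 2 := by
      have := Nat.ceil_lt_add_one (by positivity : (0:ℝ) ≤ d / δ)
      push_cast [hn_def]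
      linarith
    have h2 : (1 : ℝ) ≤ d / δ := (one_le_div hδ).2 hxx
    have : d / δ + 2 ≤ 3 * (d / δ) := by linarith
    calc (n : ℝ) ≤ d / δ + 2 := h1
      _ ≤ 3 * (d / δ) := this
      _ = 3 / δ * d := by ring
  calc ‖u x - u x'‖ = dist (u x) (u x') := (dist_eq_norm _ _).symm
    _ ≤ (n : ℝ) := key
    _ ≤ 3 / δ * d := hbound
end

section
/- Let C₁,…,C_h be pairwise disjoint finite sets with C₁ = {1,2}, let M = M(C₁,…,C_h) be the associated 3-level metric graph with shortest path metric, let K be a compact Hausdorff space, 1 ≤ D < 2, and let f : M → C(K) satisfy d(x,y) ≤ ‖f(x) − f(y)‖ ≤ D d(x,y). Then for every choice of aᵢ ≠ bᵢ in Cᵢ (1 ≤ i ≤ h), the intersection ⋂_{i=1}^h X^f_{aᵢ,bᵢ} is nonempty, where X^f_{a,b} = {t ∈ K : |f(a)(t) − f(b)(t)| ≥ 4 − 2D}. -/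
/- The 3-level graph M(C₁,…,C_h): vertex `base` = ⋆, vertices `mid i c` = points of the
pairwise disjoint sets Cᵢ (modelled as distinct types `C i`), vertices `top f` = elements
of F = {{c₁,…,c_h} : cᵢ ∈ Cᵢ} (a set in F is identified with the choice function f). -/
inductive ThreeLevelVertex (h : ℕ) (C : Fin h → Type*) where
  | base : ThreeLevelVertex h C
  | mid (i : Fin h) (c : C i) : ThreeLevelVertex h C
  | top (f : ∀ i, C i) : ThreeLevelVertex h C

/-- Adjacency: ⋆ is joined to every second-level point, and a second-level point `c ∈ Cᵢ`
is joined to a third-level point `f ∈ F` iff `c ∈ f`, i.e. `f i = c`. -/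
def threeLevelAdj {h : ℕ} {C : Fin h → Type*} :
    ThreeLevelVertex h C → ThreeLevelVertex h C → Prop
  | .base, .mid _ _ => True
  | .mid _ _, .base => True
  | .mid i c, .top f => f i = c
  | .top f, .mid i c => f i = c
  | _, _ => False

def threeLevelGraph (h : ℕ) (C : Fin h → Type*) : SimpleGraph (ThreeLevelVertex h C) where
  Adj := threeLevelAdj
  symm := ⟨by intro a b hab; cases a <;> cases b <;> simp_all [threeLevelAdj]⟩
  loopless := ⟨by intro a hab; cases a <;> simp_all [threeLevelAdj]⟩
section
variable {h : ℕ} {C : Fin h → Type*}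

open ThreeLevelVertex

lemma wlen2 {u v : ThreeLevelVertex h C} (hne : u ≠ v)
    (hadj : ¬ (threeLevelGraph h C).Adj u v) (w : (threeLevelGraph h C).Walk u v) :
    2 ≤ w.length := by
  cases w with
  | nil => exact absurd rfl hne
  | cons h1 w1 =>
    cases w1 with
    | nil => exact absurd h1 hadj
    | cons h2 w2 => simp [SimpleGraph.Walk.length_cons]


lemma walk_top_top_len {a b : ∀ i, C i} (hh : 0 < h) (hab : ∀ i, a i ≠ b i)
    (w : (threeLevelGraph h C).Walk (top a) (top b)) : 4 ≤ w.length := by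
  cases w with
  | nil => exact absurd rfl (hab ⟨0, hh⟩)
  | @cons _ v1 _ h1 w1 =>
    cases v1 with
    | base => exact absurd h1 (by intro hq; cases hq)
    | top g => exact absurd h1 (by intro hq; cases hq)
    | mid i c =>
      have hc : c = a i := (show threeLevelAdj (top a) (mid i c) from h1).symm
      subst hc
      cases w1 with
      | @cons _ v2 _ h2 w2 =>
        cases v2 with
        | mid j d => exact absurd h2 (by intro hq; cases hq)
        | base =>
          have := wlen2 (u := (base : ThreeLevelVertex h C)) (v := top b)
            (by intro hq; cases hq) (by intro hq; cases hq) w2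
          simp only [SimpleGraph.Walk.length_cons]; omega
        | top g =>
          have hg : g ≠ b := fun hq => hab i (by rw [← hq]; exact (show g i = a i from h2).symm)
          have := wlen2 (u := (top g : ThreeLevelVertex h C)) (v := top b)
            (fun hq => hg (ThreeLevelVertex.top.inj hq)) (by intro hq; cases hq) w2
          simp only [SimpleGraph.Walk.length_cons]; omega

end

open ThreeLevelVertex


/-- for any embedding `f` of `M(C₁,…,C_h)` (with `C₁ = {1,2}`) into `C(K)` with
`d(x,y) ≤ ‖f x − f y‖ ≤ D d(x,y)`, `1 ≤ D < 2`, and any choices `aᵢ ≠ bᵢ` in `Cᵢ`, the sets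
`X^f_{aᵢ,bᵢ} = {t : |f(aᵢ)(t) − f(bᵢ)(t)| ≥ 4 − 2D}` have a common point. -/
theorem stmt19 (h : ℕ) (hh : 0 < h) (C : Fin h → Type*) [∀ i, Fintype (C i)]
    [∀ i, Nonempty (C i)]
    (one two : C ⟨0, hh⟩) (h12 : one ≠ two) (hC0 : ∀ c : C ⟨0, hh⟩, c = one ∨ c = two)
    (K : Type*) [TopologicalSpace K] [CompactSpace K] [T2Space K]
    (D : ℝ) (hD1 : 1 ≤ D) (hD2 : D < 2)
    (f : ThreeLevelVertex h C → C(K, ℝ))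
    (hf : ∀ x y : ThreeLevelVertex h C,
      ((threeLevelGraph h C).dist x y : ℝ) ≤ ‖f x - f y‖ ∧
      ‖f x - f y‖ ≤ D * ((threeLevelGraph h C).dist x y : ℝ))
    (a b : ∀ i, C i) (hab : ∀ i, a i ≠ b i) :
    ∃ t : K, ∀ i : Fin h,
      4 - 2 * D ≤ |f (.mid i (a i)) t - f (.mid i (b i)) t| := by
  set G := threeLevelGraph h C
  set i0 : Fin h := ⟨0, hh⟩
  -- explicit walk of length 4 between the two top vertices
  have w4 : G.Walk (top a) (top b) :=
    SimpleGraph.Walk.cons (show G.Adj (top a) (mid i0 (a i0)) from rfl)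
      (SimpleGraph.Walk.cons (show G.Adj (mid i0 (a i0)) base from trivial)
        (SimpleGraph.Walk.cons (show G.Adj base (mid i0 (b i0)) from trivial)
          (SimpleGraph.Walk.cons (show G.Adj (mid i0 (b i0)) (top b) from rfl)
            SimpleGraph.Walk.nil)))
  have hr : G.Reachable (top a) (top b) := ⟨w4⟩
  obtain ⟨p, hp⟩ := hr.exists_walk_length_eq_dist
  have hd4 : 4 ≤ G.dist (top a) (top b) := hp ▸ walk_top_top_len hh hab p
  have hnorm4 : (4 : ℝ) ≤ ‖f (top a) - f (top b)‖ := by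
    refine le_trans ?_ (hf (top a) (top b)).1
    exact_mod_cast hd4
  -- K is nonempty
  have hK : Nonempty K := by
    by_contra hK
    have : IsEmpty K := not_nonempty_iff.mp hK
    have : f (top a) - f (top b) = 0 := ContinuousMap.ext fun t => (this.false t).elim
    rw [this, norm_zero] at hnorm4
    linarith
  -- maximize |g t|
  set g : C(K, ℝ) := f (top a) - f (top b) with hg
  obtain ⟨t, -, ht⟩ := isCompact_univ.exists_isMaxOn (Set.univ_nonempty)
    (g.continuous.abs.continuousOn : ContinuousOn (fun s => |g s|) Set.univ)
  have htmax : (4 : ℝ) ≤ |g t| := by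
    refine le_trans hnorm4 ?_
    refine (ContinuousMap.norm_le _ (abs_nonneg _)).mpr fun s => ?_
    rw [Real.norm_eq_abs]
    exact ht (Set.mem_univ s)
  refine ⟨t, fun i => ?_⟩
  -- bounds on the two short edges
  have hedge : ∀ (x y : ThreeLevelVertex h C), G.Adj x y → ∀ s : K, |f x s - f y s| ≤ D := by
    intro x y hxy s
    have hd1 : G.dist x y ≤ 1 :=
      SimpleGraph.dist_le (SimpleGraph.Walk.cons hxy SimpleGraph.Walk.nil)
    have h2 : ‖f x - f y‖ ≤ D := by
      refine le_trans (hf x y).2 ?_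
      have : (G.dist x y : ℝ) ≤ 1 := by exact_mod_cast hd1
      nlinarith
    calc |f x s - f y s| = ‖(f x - f y) s‖ := by rw [ContinuousMap.sub_apply, Real.norm_eq_abs]
      _ ≤ ‖f x - f y‖ := ContinuousMap.norm_coe_le_norm _ s
      _ ≤ D := h2
  have e1 := hedge (top a) (mid i (a i)) (show G.Adj (top a) (mid i (a i)) from rfl) t
  have e2 := hedge (mid i (b i)) (top b) (show G.Adj (mid i (b i)) (top b) from rfl) t
  have tri : |f (top a) t - f (top b) t| ≤
      |f (top a) t - f (mid i (a i)) t| + |f (mid i (a i)) t - f (mid i (b i)) t|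
        + |f (mid i (b i)) t - f (top b) t| :=
    le_trans (abs_sub_le _ (f (mid i (a i)) t) _)
      (by linarith [abs_sub_le (f (mid i (a i)) t) (f (mid i (b i)) t) (f (top b) t)])
  have hgt : |g t| = |f (top a) t - f (top b) t| := by rw [hg, ContinuousMap.sub_apply]
  rw [hgt] at htmax
  linarith
end
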